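/- Let Y be a topological space with a closed partial order, and let ψ be a monotone flow on Y (each time-t map preserves the order). If p is a periodic point of ψ, then the orbit of p is unordered: no two distinct points x, y on the orbit of p satisfy x ≺ y. -/

import Mathlib

set_option maxHeartbeats 1000000


/-- A monotone flow on a space with a closed partial order has unordered
periodic orbits: no two points on the orbit of a periodic point `p` are
strictly comparable. -/
theorem periodic_orbit_unordered
    {Y : Type*} [TopologicalSpace Y] [PartialOrder Y] [OrderClosedTopology Y]
    (φ : ℝ → Y → Y)
    (hcont : Continuous fun z : ℝ × Y => φ z.1 z.2)
    (hzero : ∀ x, φ 0 x = x)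
    (hadd : ∀ s t x, φ (s + t) x = φ s (φ t x))
    (hmono : ∀ t : ℝ, Monotone (φ t))
    (p : Y) (r : ℝ) (hr : 0 < r) (hper : φ r p = p) :
    ∀ a b : ℝ, ¬ φ a p < φ b p := by
  intro a b hab
  set q : Y := φ a p with hq
  have hqper : φ r q = q := by
    rw [hq, ← hadd, add_comm, hadd, hper]
  set c : ℝ := b - a with hc
  set f : ℝ → Y := fun t => φ t q with hf
  have hf0 : f 0 = φ a p := by simp only [hf, hzero, hq]
  have hfc : f c = φ b p := by
    simp only [hf, hq, ← hadd, hc, sub_add_cancel]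
  have hlt : f 0 < f c := by rw [hf0, hfc]; exact hab
  have hfcont : Continuous f := hcont.comp (continuous_id.prodMk continuous_const)
  -- translation of inequalities
  have key : ∀ s t u : ℝ, f s ≤ f t → f (u + s) ≤ f (u + t) := by
    intro s t u h
    show φ (u + s) q ≤ φ (u + t) q
    rw [hadd, hadd]
    exact hmono u h
  -- periodicity in both directions
  have hper' : ∀ t, f (t + r) = f t := by
    intro t
    show φ (t + r) q = φ t q
    rw [hadd, hqper]
  have hper'' : ∀ t, f (t - r) = f t := by
    intro t
    rw [← hper' (t - r), sub_add_cancel]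
  have hperm : ∀ (m : ℤ) (t : ℝ), f (t + (m : ℝ) * r) = f t := by
    intro m
    induction m using Int.induction_on with
    | zero => intro t; simp
    | succ k ih =>
        intro t
        have : t + ((k : ℤ) + 1 : ℤ) * r = (t + (k : ℝ) * r) + r := by push_cast; ring
        rw [this, hper']
        exact_mod_cast ih t
    | pred k ih =>
        intro t
        have : t + (-(k : ℤ) - 1 : ℤ) * r = (t + (-(k : ℝ)) * r) - r := by push_cast; ring
        rw [this, hper'']
        have := ih t
        push_cast at this ⊢
        exact this
  -- the set U
  set U : Set ℝ := {t | f 0 ≤ f t} with hU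
  have hUclosed : IsClosed U := isClosed_le continuous_const hfcont
  have hUadd : ∀ s t, s ∈ U → t ∈ U → s + t ∈ U := by
    intro s t hs ht
    have h1 : f (t + 0) ≤ f (t + s) := key 0 s t hs
    rw [add_zero] at h1
    exact le_trans ht (by rwa [add_comm s t])
  have hUc : c ∈ U := le_of_lt hlt
  have hUr : ∀ m : ℤ, (m : ℝ) * r ∈ U := by
    intro m
    show f 0 ≤ f ((m : ℝ) * r)
    have := hperm m 0
    rw [zero_add] at this
    rw [this]
  have hUtr : ∀ t (m : ℤ), t ∈ U → t + (m : ℝ) * r ∈ U := by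
    intro t m ht
    show f 0 ≤ f (t + (m : ℝ) * r)
    rw [hperm m t]; exact ht
  have hUnc : ∀ n : ℕ, (n : ℝ) * c ∈ U := by
    intro n
    induction n with
    | zero =>
        show f 0 ≤ f (((0 : ℕ) : ℝ) * c)
        norm_num
    | succ k ih =>
        have : ((k + 1 : ℕ) : ℝ) * c = (k : ℝ) * c + c := by push_cast; ring
        rw [this]
        exact hUadd _ _ ih hUc
  -- chain: f c ≤ f (n c) for n ≥ 1
  have hchain : ∀ n : ℕ, 1 ≤ n → f c ≤ f ((n : ℝ) * c) := by
    intro n hn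
    obtain ⟨k, rfl⟩ := Nat.exists_eq_add_of_le hn
    have h1 : f (c + 0) ≤ f (c + (k : ℝ) * c) := key 0 _ c (hUnc k)
    rw [add_zero] at h1
    have : ((1 + k : ℕ) : ℝ) * c = c + (k : ℝ) * c := by push_cast; ring
    rw [this]
    exact h1
  -- a rational relation kills everything
  have hratcase : ¬ ∃ (n : ℕ) (m : ℤ), 1 ≤ n ∧ (n : ℝ) * c = (m : ℝ) * r := by
    rintro ⟨n, m, hn, hnm⟩
    have h1 : f c ≤ f ((n : ℝ) * c) := hchain n hn
    have h2 : f ((m : ℝ) * r) = f 0 := by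
      have := hperm m 0; rwa [zero_add] at this
    rw [hnm, h2] at h1
    exact absurd (lt_of_lt_of_le hlt h1) (lt_irrefl _)
  -- main claim: U = univ
  have hUuniv : ∀ t : ℝ, t ∈ U := by
    rcases AddSubgroup.dense_or_cyclic (AddSubgroup.closure {c, r}) with hd | ⟨x0, hx0⟩
    · -- dense case: use the circle
      haveI : Fact (0 < r) := ⟨hr⟩
      set π : ℝ → AddCircle r := QuotientAddGroup.mk with hπ
      have hπq : Topology.IsQuotientMap π := QuotientAddGroup.isQuotientMap_mk _
      set x : AddCircle r := π c with hx
      -- image of the closure subgroup lands in zmultiples x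
      have hsub : ((AddSubgroup.closure {c, r} : AddSubgroup ℝ) : Set ℝ) ⊆
          π ⁻¹' (AddSubgroup.zmultiples x : Set (AddCircle r)) := by
        intro t ht
        have hle : AddSubgroup.closure {c, r} ≤
            (AddSubgroup.zmultiples x).comap
              (QuotientAddGroup.mk' (AddSubgroup.zmultiples r)) := by
          rw [AddSubgroup.closure_le]
          intro y hy
          rcases hy with rfl | hy
          · exact AddSubgroup.mem_zmultiples x
          · rw [Set.mem_singleton_iff] at hy
            rw [hy]
            show ((r : ℝ) : AddCircle r) ∈ AddSubgroup.zmultiples x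
            have hz : ((r : ℝ) : AddCircle r) = 0 := by
              rw [QuotientAddGroup.eq_zero_iff]
              exact AddSubgroup.mem_zmultiples r
            rw [hz]
            exact zero_mem _
        exact hle ht
      -- dense zmultiples
      have hdz : Dense (AddSubgroup.zmultiples x : Set (AddCircle r)) := by
        have himg : Dense (π '' ((AddSubgroup.closure {c, r} : AddSubgroup ℝ) : Set ℝ)) := by
          have hsurj : DenseRange π :=
            (QuotientAddGroup.mk_surjective).denseRange
          exact hsurj.dense_image hπq.continuous hd
        exact himg.mono (Set.image_subset_iff.mpr hsub)
      have hdz' : DenseRange (fun n : ℤ => n • x) := by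
        have : Set.range (fun n : ℤ => n • x) = (AddSubgroup.zmultiples x : Set (AddCircle r)) := by
          ext y
          simp [AddSubgroup.mem_zmultiples_iff, Set.mem_range, eq_comm]
        rwa [DenseRange, this]
      have hdn : DenseRange (fun n : ℕ => n • x) := denseRange_zsmul_iff_nsmul.mp hdz'
      -- the image of U
      set V : Set (AddCircle r) := π '' U with hV
      have hpre : π ⁻¹' V = U := by
        ext t
        constructor
        · rintro ⟨u, hu, huq⟩
          have : t - u ∈ AddSubgroup.zmultiples r := by
            rw [← QuotientAddGroup.eq_iff_sub_mem]
            exact huq.symm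
          obtain ⟨m, hm⟩ := this
          have hm' : (m : ℝ) * r = t - u := by
            simpa [zsmul_eq_mul] using hm
          have ht : t = u + (m : ℝ) * r := by linarith
          rw [ht]
          exact hUtr u m hu
        · intro ht
          exact ⟨t, ht, rfl⟩
      have hVclosed : IsClosed V := by
        rw [← hπq.isClosed_preimage, hpre]
        exact hUclosed
      have hVsub : Set.range (fun n : ℕ => n • x) ⊆ V := by
        rintro _ ⟨n, rfl⟩
        refine ⟨(n : ℝ) * c, hUnc n, ?_⟩
        show π ((n : ℝ) * c) = n • x
        rw [hx, hπ]
        have h1 : (n : ℝ) * c = (n • c : ℝ) := by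
          rw [nsmul_eq_mul]
        rw [h1]
        exact AddCircle.coe_nsmul r
      have hVuniv : V = Set.univ := by
        have : Dense V := hdn.mono hVsub
        rw [← this.closure_eq, hVclosed.closure_eq]
      intro t
      rw [← hpre, hVuniv]
      exact Set.mem_univ _
    · -- cyclic case: a rational relation exists, contradiction
      exfalso
      apply hratcase
      have hcmem : c ∈ AddSubgroup.closure ({c, r} : Set ℝ) :=
        AddSubgroup.subset_closure (by simp)
      have hrmem : r ∈ AddSubgroup.closure ({c, r} : Set ℝ) :=
        AddSubgroup.subset_closure (by simp)
      rw [hx0, AddSubgroup.mem_closure_singleton] at hcmem hrmem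
      obtain ⟨i, hi⟩ := hcmem
      obtain ⟨j, hj⟩ := hrmem
      have hi' : c = (i : ℝ) * x0 := by rw [← hi, zsmul_eq_mul]
      have hj' : r = (j : ℝ) * x0 := by rw [← hj, zsmul_eq_mul]
      have hjne : j ≠ 0 := by
        rintro rfl
        rw [Int.cast_zero, zero_mul] at hj'
        exact absurd hj' (ne_of_gt hr)
      have hn1 : 1 ≤ j.natAbs := Nat.one_le_iff_ne_zero.mpr (Int.natAbs_ne_zero.mpr hjne)
      rcases Int.natAbs_eq j with hje | hje
      · refine ⟨j.natAbs, i, hn1, ?_⟩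
        have hnr : ((j.natAbs : ℕ) : ℝ) = (j : ℝ) := by
          have hjpos : (0 : ℤ) ≤ j := by omega
          push_cast [Nat.cast_natAbs]
          exact abs_of_nonneg (by exact_mod_cast hjpos)
        rw [hi', hj', hnr]; ring
      · refine ⟨j.natAbs, -i, hn1, ?_⟩
        have hnr : ((j.natAbs : ℕ) : ℝ) = -(j : ℝ) := by
          have hjneg : j ≤ (0 : ℤ) := by omega
          push_cast [Nat.cast_natAbs]
          exact abs_of_nonpos (by exact_mod_cast hjneg)
        rw [hi', hj', hnr]; push_cast; ring
  -- finish: f is constant, contradiction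
  have hL : ∀ t : ℝ, f t ≤ f 0 := by
    intro t
    have h1 : f 0 ≤ f (-t) := hUuniv (-t)
    have h2 : f (t + 0) ≤ f (t + -t) := key 0 (-t) t h1
    rwa [add_zero, add_neg_cancel] at h2
  exact absurd (lt_of_lt_of_le hlt (hL c)) (lt_irrefl _)
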